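/- arXiv:2011.04298 — 4 statements merged into one kernel-verified Lean document; each statement's English description precedes it below -/
import Mathlib

section
/- Let θ(r) = P(‖Z - x‖² ≤ r) where Z ~ N(0, I_2) and x ∈ R^2 is fixed. Then for all r > 0, e^{-‖x‖²/2}(1 - e^{-r/2})e^{-2‖x‖√r} ≤ θ(r) ≤ e^{-‖x‖²/2}(1 - e^{-r/2})e^{2‖x‖√r}. -/
open MeasureTheory ProbabilityTheory Real Set

noncomputable def d2 (p : ℝ × ℝ) : ℝ := gaussianPDFReal 0 1 p.1 * gaussianPDFReal 0 1 p.2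

lemma gpdf_eq (t : ℝ) : gaussianPDFReal 0 1 t = (Real.sqrt (2 * π))⁻¹ * Real.exp (-t ^ 2 / 2) := by
  simp [gaussianPDFReal]

lemma d2_eq (p : ℝ × ℝ) : d2 p = (2 * π)⁻¹ * Real.exp (-(p.1 ^ 2 + p.2 ^ 2) / 2) := by
  rw [d2, gpdf_eq, gpdf_eq, mul_mul_mul_comm, ← Real.exp_add, ← mul_inv,
    Real.mul_self_sqrt (by positivity : (0:ℝ) ≤ 2 * π)]
  ring_nf

lemma d2_nonneg (p : ℝ × ℝ) : 0 ≤ d2 p :=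
  mul_nonneg (gaussianPDFReal_nonneg _ _ _) (gaussianPDFReal_nonneg _ _ _)

lemma d2_measurable : Measurable d2 :=
  ((measurable_gaussianPDFReal 0 1).comp measurable_fst).mul
    ((measurable_gaussianPDFReal 0 1).comp measurable_snd)

lemma d2_integrable : Integrable d2 (volume : Measure (ℝ × ℝ)) := by
  rw [Measure.volume_eq_prod]
  exact (integrable_gaussianPDFReal 0 1).mul_prod (integrable_gaussianPDFReal 0 1)

lemma prod_gaussian_eq :
    (gaussianReal 0 1).prod (gaussianReal 0 1) =
      (volume : Measure (ℝ × ℝ)).withDensity (fun p => ENNReal.ofReal (d2 p)) := by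
  rw [Measure.volume_eq_prod]
  refine Measure.prod_eq fun s t hs ht => ?_
  rw [withDensity_apply _ (hs.prod ht), ← Measure.prod_restrict]
  have : ∀ p : ℝ × ℝ, ENNReal.ofReal (d2 p) =
      ENNReal.ofReal (gaussianPDFReal 0 1 p.1) * ENNReal.ofReal (gaussianPDFReal 0 1 p.2) :=
    fun p => ENNReal.ofReal_mul (gaussianPDFReal_nonneg _ _ _)
  simp_rw [this]
  rw [lintegral_prod_mul ((measurable_gaussianPDFReal 0 1).ennreal_ofReal.aemeasurable)
    ((measurable_gaussianPDFReal 0 1).ennreal_ofReal.aemeasurable)]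
  rw [gaussianReal_apply 0 one_ne_zero s, gaussianReal_apply 0 one_ne_zero t]
  rfl

lemma measure_toReal {U : Set (ℝ × ℝ)} (hU : MeasurableSet U) :
    (((gaussianReal 0 1).prod (gaussianReal 0 1)) U).toReal = ∫ p in U, d2 p := by
  rw [prod_gaussian_eq, withDensity_apply _ hU,
    integral_eq_lintegral_of_nonneg_ae (ae_of_all _ fun p => d2_nonneg p)
      d2_measurable.aestronglyMeasurable]

lemma disk_mass {r : ℝ} (hr : 0 < r) :
    ∫ p in {p : ℝ × ℝ | p.1 ^ 2 + p.2 ^ 2 ≤ r}, d2 p = 1 - Real.exp (-r / 2) := by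
  set D : Set (ℝ × ℝ) := {p | p.1 ^ 2 + p.2 ^ 2 ≤ r} with hDdef
  have hD : MeasurableSet D := measurableSet_le (by fun_prop) measurable_const
  have key := integral_comp_polarCoord_symm (D.indicator d2)
  rw [integral_indicator hD] at key
  rw [← key]
  have hcong : ∀ p ∈ polarCoord.target,
      p.1 • (D.indicator d2) (polarCoord.symm p) =
        (Set.Ioc (0:ℝ) (Real.sqrt r)).indicator
          (fun ρ => ρ * ((2 * π)⁻¹ * Real.exp (-ρ ^ 2 / 2))) p.1 := by
    rintro ⟨ρ, φ⟩ ⟨h1, _⟩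
    simp only [mem_Ioi] at h1
    have hsq : (ρ * Real.cos φ) ^ 2 + (ρ * Real.sin φ) ^ 2 = ρ ^ 2 := by
      have := Real.sin_sq_add_cos_sq φ; nlinarith
    have hmem : polarCoord.symm (ρ, φ) ∈ D ↔ ρ ∈ Set.Ioc (0:ℝ) (Real.sqrt r) := by
      simp only [hDdef, polarCoord_symm_apply, mem_setOf_eq, hsq, Set.mem_Ioc]
      constructor
      · intro h; exact ⟨h1, (Real.le_sqrt h1.le hr.le).2 h⟩
      · rintro ⟨-, h⟩; exact (Real.le_sqrt h1.le hr.le).1 h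
    by_cases h : polarCoord.symm (ρ, φ) ∈ D
    · rw [Set.indicator_of_mem h, Set.indicator_of_mem (hmem.1 h)]
      rw [d2_eq, polarCoord_symm_apply]
      simp only [smul_eq_mul, hsq]
    · rw [Set.indicator_of_notMem h, Set.indicator_of_notMem (fun hc => h (hmem.2 hc))]
      simp
  rw [setIntegral_congr_fun polarCoord.open_target.measurableSet hcong]
  have htarget : polarCoord.target = Set.Ioi (0:ℝ) ×ˢ Set.Ioo (-π) π := rfl
  set I : ℝ → ℝ := (Set.Ioc (0:ℝ) (Real.sqrt r)).indicator
      (fun ρ => ρ * ((2 * π)⁻¹ * Real.exp (-ρ ^ 2 / 2))) with hI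
  have hfub : ∫ p in polarCoord.target, I p.1 =
      (∫ ρ in Set.Ioi (0:ℝ), I ρ) * ∫ φ in Set.Ioo (-π) π, (1:ℝ) := by
    rw [htarget, Measure.volume_eq_prod, ← Measure.prod_restrict]
    simpa using integral_prod_mul (μ := volume.restrict (Set.Ioi (0:ℝ)))
      (ν := volume.restrict (Set.Ioo (-π) π)) I (fun _ => (1:ℝ))
  rw [hfub]
  have hone : ∫ φ in Set.Ioo (-π) π, (1:ℝ) = 2 * π := by
    simp [Real.volume_Ioo]
    rw [max_eq_left (by positivity)]
    ring
  have hIoi : ∫ ρ in Set.Ioi (0:ℝ), I ρ =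
      ∫ ρ in Set.Ioc (0:ℝ) (Real.sqrt r), ρ * ((2 * π)⁻¹ * Real.exp (-ρ ^ 2 / 2)) := by
    rw [hI, setIntegral_indicator measurableSet_Ioc,
      Set.inter_eq_self_of_subset_right Set.Ioc_subset_Ioi_self]
  have hftc : ∫ ρ in (0:ℝ)..(Real.sqrt r), ρ * ((2 * π)⁻¹ * Real.exp (-ρ ^ 2 / 2)) =
      (2 * π)⁻¹ * (1 - Real.exp (-r / 2)) := by
    have hderiv : ∀ ρ ∈ Set.uIcc (0:ℝ) (Real.sqrt r),
        HasDerivAt (fun ρ : ℝ => -((2 * π)⁻¹ * Real.exp (-ρ ^ 2 / 2)))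
          (ρ * ((2 * π)⁻¹ * Real.exp (-ρ ^ 2 / 2))) ρ := by
      intro ρ _
      have h1 : HasDerivAt (fun ρ : ℝ => -ρ ^ 2 / 2) (-ρ) ρ := by
        have h := (hasDerivAt_pow 2 ρ).neg.div_const 2
        refine h.congr_deriv ?_
        push_cast
        ring
      have h2 := ((h1.exp.const_mul ((2 * π)⁻¹)).neg)
      refine h2.congr_deriv ?_
      ring
    rw [intervalIntegral.integral_eq_sub_of_hasDerivAt hderiv
      (by apply Continuous.intervalIntegrable; fun_prop)]
    rw [Real.sq_sqrt hr.le]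
    rw [show (-(0:ℝ) ^ 2 / 2) = 0 by ring, Real.exp_zero]
    ring
  rw [hIoi, ← intervalIntegral.integral_of_le (Real.sqrt_nonneg r), hftc, hone]
  field_simp

lemma shift_integral (c : ℝ × ℝ) (r : ℝ) :
    ∫ p in {p : ℝ × ℝ | (p.1 - c.1) ^ 2 + (p.2 - c.2) ^ 2 ≤ r}, d2 p
      = ∫ q in {p : ℝ × ℝ | p.1 ^ 2 + p.2 ^ 2 ≤ r}, d2 (q + c) := by
  set T : Set (ℝ × ℝ) := {p | (p.1 - c.1) ^ 2 + (p.2 - c.2) ^ 2 ≤ r} with hTdef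
  set D : Set (ℝ × ℝ) := {p | p.1 ^ 2 + p.2 ^ 2 ≤ r} with hDdef
  have hT : MeasurableSet T := measurableSet_le (by fun_prop) measurable_const
  have hD : MeasurableSet D := measurableSet_le (by fun_prop) measurable_const
  rw [← integral_indicator hT, ← integral_indicator hD]
  have h1 : ∫ q : ℝ × ℝ, T.indicator d2 (q + c) = ∫ p : ℝ × ℝ, T.indicator d2 p :=
    integral_add_right_eq_self _ c
  rw [← h1]
  congr 1
  ext q
  have hmem : q + c ∈ T ↔ q ∈ D := by
    simp only [hTdef, hDdef, Set.mem_setOf_eq, Prod.fst_add, Prod.snd_add,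
      add_sub_cancel_right]
  by_cases h : q ∈ D
  · rw [Set.indicator_of_mem (hmem.2 h), Set.indicator_of_mem h]
  · rw [Set.indicator_of_notMem (fun hc => h (hmem.1 hc)), Set.indicator_of_notMem h]

lemma d2_shift_bound (c q : ℝ × ℝ) {r : ℝ} (hr : 0 ≤ r) (hq : q.1 ^ 2 + q.2 ^ 2 ≤ r) :
    Real.exp (-(c.1 ^ 2 + c.2 ^ 2) / 2 - Real.sqrt (c.1 ^ 2 + c.2 ^ 2) * Real.sqrt r) * d2 q
      ≤ d2 (q + c) ∧
    d2 (q + c) ≤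
      Real.exp (-(c.1 ^ 2 + c.2 ^ 2) / 2 + Real.sqrt (c.1 ^ 2 + c.2 ^ 2) * Real.sqrt r) * d2 q := by
  set m := c.1 ^ 2 + c.2 ^ 2 with hmdef
  have hm : 0 ≤ m := by positivity
  have hdot : |c.1 * q.1 + c.2 * q.2| ≤ Real.sqrt m * Real.sqrt r := by
    have h1 : (c.1 * q.1 + c.2 * q.2) ^ 2 ≤ (Real.sqrt m * Real.sqrt r) ^ 2 := by
      rw [mul_pow, Real.sq_sqrt hm, Real.sq_sqrt hr]
      nlinarith [sq_nonneg (c.1 * q.2 - c.2 * q.1), sq_nonneg c.1, sq_nonneg c.2]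
    have h2 : 0 ≤ Real.sqrt m * Real.sqrt r := by positivity
    nlinarith [sq_abs (c.1 * q.1 + c.2 * q.2), abs_nonneg (c.1 * q.1 + c.2 * q.2)]
  have hd : d2 (q + c) = Real.exp (-(c.1 * q.1 + c.2 * q.2) - m / 2) * d2 q := by
    rw [d2_eq, d2_eq]
    simp only [Prod.fst_add, Prod.snd_add]
    rw [mul_comm (Real.exp _) _, mul_assoc, ← Real.exp_add]
    congr 1
    rw [hmdef]
    ring
  obtain ⟨hl, hu⟩ := abs_le.1 hdot
  rw [hd]
  constructor
  · exact mul_le_mul_of_nonneg_right (Real.exp_le_exp.2 (by linarith)) (d2_nonneg q)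
  · exact mul_le_mul_of_nonneg_right (Real.exp_le_exp.2 (by linarith)) (d2_nonneg q)

theorem stmt_3 (x : Fin 2 → ℝ) (r : ℝ) (hr : 0 < r) :
    let θ : ℝ → ℝ := fun s =>
      ((Measure.pi fun _ : Fin 2 => gaussianReal 0 1)
        {z : Fin 2 → ℝ | ∑ i, (z i - x i) ^ 2 ≤ s}).toReal
    Real.exp (-(∑ i, (x i) ^ 2) / 2) * (1 - Real.exp (-r / 2)) *
        Real.exp (-2 * Real.sqrt (∑ i, (x i) ^ 2) * Real.sqrt r) ≤ θ r ∧
    θ r ≤ Real.exp (-(∑ i, (x i) ^ 2) / 2) * (1 - Real.exp (-r / 2)) *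
        Real.exp (2 * Real.sqrt (∑ i, (x i) ^ 2) * Real.sqrt r) := by
  intro θ
  set c : ℝ × ℝ := (x 0, x 1) with hc
  set D : Set (ℝ × ℝ) := {p | p.1 ^ 2 + p.2 ^ 2 ≤ r} with hDdef
  set T : Set (ℝ × ℝ) := {p | (p.1 - c.1) ^ 2 + (p.2 - c.2) ^ 2 ≤ r} with hTdef
  have hT : MeasurableSet T := measurableSet_le (by fun_prop) measurable_const
  have hD : MeasurableSet D := measurableSet_le (by fun_prop) measurable_const
  have hθ : θ r = ∫ q in D, d2 (q + c) := by
    have h0 : (Measure.pi fun _ : Fin 2 => gaussianReal 0 1)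
        {z : Fin 2 → ℝ | ∑ i, (z i - x i) ^ 2 ≤ r}
          = ((gaussianReal 0 1).prod (gaussianReal 0 1)) T := by
      rw [← (measurePreserving_finTwoArrow (gaussianReal 0 1)).map_eq,
        MeasurableEquiv.map_apply]
      congr 1
      ext z
      simp [hTdef, hc, Fin.sum_univ_two, MeasurableEquiv.finTwoArrow_apply]
    show ((Measure.pi fun _ : Fin 2 => gaussianReal 0 1) _).toReal = _
    rw [h0, measure_toReal hT, hTdef, shift_integral c r]
  -- integrability
  have hIntc : Integrable (fun q => d2 (q + c)) (volume : Measure (ℝ × ℝ)) :=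
    ((measurePreserving_add_right (volume : Measure (ℝ × ℝ)) c).integrable_comp
      d2_measurable.aestronglyMeasurable).2 d2_integrable
  set m : ℝ := c.1 ^ 2 + c.2 ^ 2 with hmdef
  set n : ℝ := Real.sqrt m with hndef
  set R : ℝ := Real.sqrt r with hRdef
  have hnR : 0 ≤ n * R := by positivity
  have hmass : ∀ K : ℝ, ∫ q in D, Real.exp K * d2 q = Real.exp K * (1 - Real.exp (-r / 2)) := by
    intro K
    rw [integral_const_mul, hDdef, disk_mass hr]
  have hlow : Real.exp (-m / 2 - n * R) * (1 - Real.exp (-r / 2)) ≤ θ r := by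
    rw [hθ, ← hmass (-m / 2 - n * R)]
    refine setIntegral_mono_on ((d2_integrable.const_mul _).integrableOn) hIntc.integrableOn hD
      fun q hq => (d2_shift_bound c q hr.le hq).1
  have hup : θ r ≤ Real.exp (-m / 2 + n * R) * (1 - Real.exp (-r / 2)) := by
    rw [hθ, ← hmass (-m / 2 + n * R)]
    refine setIntegral_mono_on hIntc.integrableOn ((d2_integrable.const_mul _).integrableOn) hD
      fun q hq => (d2_shift_bound c q hr.le hq).2
  have hpos : 0 ≤ 1 - Real.exp (-r / 2) := by
    have := Real.exp_lt_one_iff.2 (by linarith : -r / 2 < 0)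
    linarith
  simp only [Fin.sum_univ_two]
  have hmeq : x 0 ^ 2 + x 1 ^ 2 = m := rfl
  rw [hmeq]
  constructor
  · refine le_trans ?_ hlow
    rw [Real.exp_sub, ← hndef]
    calc Real.exp (-m / 2) * (1 - Real.exp (-r / 2)) * Real.exp (-2 * n * R)
        ≤ Real.exp (-m / 2) * (1 - Real.exp (-r / 2)) * Real.exp (-(n * R)) := by
          refine mul_le_mul_of_nonneg_left (Real.exp_le_exp.2 (by nlinarith)) ?_
          positivity
      _ = Real.exp (-m / 2) / Real.exp (n * R) * (1 - Real.exp (-r / 2)) := by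
          rw [Real.exp_neg]; ring
  · refine le_trans hup ?_
    rw [Real.exp_add, ← hndef]
    calc Real.exp (-m / 2) * Real.exp (n * R) * (1 - Real.exp (-r / 2))
        = Real.exp (-m / 2) * (1 - Real.exp (-r / 2)) * Real.exp (n * R) := by ring
      _ ≤ Real.exp (-m / 2) * (1 - Real.exp (-r / 2)) * Real.exp (2 * n * R) := by
          refine mul_le_mul_of_nonneg_left (Real.exp_le_exp.2 (by nlinarith)) ?_
          positivity
end

section
/- Let σ ∈ {±1/√N}^N and let x ∈ R^N with ‖x‖ = 1. Define sign(x) ∈ {±1/√N}^N by sign(x)_i = 1/√N if x_i ≥ 0 and -1/√N otherwise. Then |⟨σ, sign(x)⟩| ≥ 4|⟨σ, x⟩| - 3. -/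
theorem stmt_5 (N : ℕ) (hN : 0 < N) (σ x : Fin N → ℝ)
    (hσ : ∀ i, σ i = 1 / Real.sqrt N ∨ σ i = -(1 / Real.sqrt N))
    (hx : ∑ i, (x i) ^ 2 = 1) :
    let s : Fin N → ℝ := fun i =>
      if 0 ≤ x i then 1 / Real.sqrt N else -(1 / Real.sqrt N)
    |∑ i, σ i * s i| ≥ 4 * |∑ i, σ i * x i| - 3 := by
  intro s
  classical
  have hNpos : (0:ℝ) < N := by exact_mod_cast hN
  set r := Real.sqrt N with hrdef
  have hr : 0 < r := Real.sqrt_pos.mpr hNpos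
  have hr2 : r * r = N := Real.mul_self_sqrt hNpos.le
  have hsdef : ∀ i, s i = if 0 ≤ x i then 1/r else -(1/r) := fun i => rfl
  have hs : ∀ i, s i = 1/r ∨ s i = -(1/r) := by
    intro i; rw [hsdef]; split
    · left; rfl
    · right; rfl
  have hdiag : ∀ i, s i * s i = 1/(N:ℝ) := by
    intro i
    have h1 : (1/r) * (1/r) = 1/(N:ℝ) := by
      rw [div_mul_div_comm, one_mul, hr2]
    rcases hs i with h | h <;> rw [h]
    · exact h1
    · rw [neg_mul_neg]; exact h1
  have hsx : ∀ i, s i * x i = |x i| / r := by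
    intro i
    rw [hsdef]
    by_cases h : 0 ≤ x i
    · rw [if_pos h, abs_of_nonneg h]; ring
    · rw [if_neg h, abs_of_neg (lt_of_not_ge h)]; ring
  -- the agreement set
  set A : Finset (Fin N) := Finset.univ.filter (fun i => σ i = s i) with hA
  set B : Finset (Fin N) := Finset.univ.filter (fun i => ¬ σ i = s i) with hB
  set k : ℝ := (A.card : ℝ) with hk
  set m : ℝ := (B.card : ℝ) with hm
  have hkm : k + m = N := by
    rw [hk, hm, hA, hB]
    have h := Finset.card_filter_add_card_filter_not
      (s := (Finset.univ : Finset (Fin N))) (p := fun i => σ i = s i)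
    rw [Finset.card_univ, Fintype.card_fin] at h
    exact_mod_cast h
  have hk0 : 0 ≤ k := by positivity
  have hm0 : 0 ≤ m := by positivity
  have hmemA : ∀ i ∈ A, σ i = s i := by
    intro i hi; rw [hA] at hi; exact (Finset.mem_filter.mp hi).2
  have hmemB : ∀ i ∈ B, σ i = -(s i) := by
    intro i hi
    rw [hB] at hi
    have hne : σ i ≠ s i := (Finset.mem_filter.mp hi).2
    rcases hσ i with h1 | h1 <;> rcases hs i with h2 | h2
    · exact absurd (h1.trans h2.symm) hne
    · rw [h1, h2, neg_neg]
    · rw [h1, h2]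
    · exact absurd (h1.trans h2.symm) hne
  have hsplit : ∀ f : Fin N → ℝ, ∑ i, f i = ∑ i ∈ A, f i + ∑ i ∈ B, f i := by
    intro f
    rw [hA, hB]
    exact (Finset.sum_filter_add_sum_filter_not Finset.univ _ f).symm
  -- value of the sign inner product
  have hS : ∑ i, σ i * s i = (k - m) / N := by
    rw [hsplit (fun i => σ i * s i)]
    have e1 : ∑ i ∈ A, σ i * s i = k * (1/(N:ℝ)) := by
      rw [Finset.sum_congr rfl (fun i hi => by rw [hmemA i hi, hdiag i]),
        Finset.sum_const, nsmul_eq_mul]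
    have e2 : ∑ i ∈ B, σ i * s i = m * (-(1/(N:ℝ))) := by
      rw [Finset.sum_congr rfl (fun i hi => by
        rw [hmemB i hi, neg_mul, hdiag i]), Finset.sum_const, nsmul_eq_mul]
    rw [e1, e2]; field_simp; ring
  -- Cauchy–Schwarz bounds on the two halves
  have habs_le : ∀ T : Finset (Fin N), ∑ i ∈ T, |x i| ≤ Real.sqrt T.card := by
    intro T
    have h1 : (∑ i ∈ T, |x i|) ^ 2 ≤ T.card * ∑ i ∈ T, |x i| ^ 2 :=
      sq_sum_le_card_mul_sum_sq
    have h2 : ∑ i ∈ T, |x i| ^ 2 ≤ 1 := by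
      rw [← hx]
      have : ∀ i ∈ T, |x i| ^ 2 = x i ^ 2 := fun i _ => sq_abs _
      rw [Finset.sum_congr rfl this]
      exact Finset.sum_le_sum_of_subset_of_nonneg (Finset.subset_univ T)
        (fun i _ _ => sq_nonneg _)
    have h3 : (∑ i ∈ T, |x i|) ^ 2 ≤ (T.card : ℝ) := by
      calc (∑ i ∈ T, |x i|) ^ 2 ≤ T.card * ∑ i ∈ T, |x i| ^ 2 := h1
        _ ≤ T.card * 1 := by
            apply mul_le_mul_of_nonneg_left h2 (by positivity)
        _ = T.card := mul_one _
    have h4 : 0 ≤ ∑ i ∈ T, |x i| := Finset.sum_nonneg fun i _ => abs_nonneg _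
    nlinarith [Real.sq_sqrt (show (0:ℝ) ≤ (T.card:ℝ) by positivity),
      Real.sqrt_nonneg ((T.card : ℝ)), sq_nonneg (∑ i ∈ T, |x i| - Real.sqrt T.card)]
  -- bound ⟨σ, x⟩ from above and below
  set t := ∑ i, σ i * x i with ht
  have htA : ∑ i ∈ A, σ i * x i = ∑ i ∈ A, |x i| / r :=
    Finset.sum_congr rfl fun i hi => by rw [hmemA i hi, hsx i]
  have htB : ∑ i ∈ B, σ i * x i = -∑ i ∈ B, |x i| / r := by
    rw [← Finset.sum_neg_distrib]
    exact Finset.sum_congr rfl fun i hi => by rw [hmemB i hi, neg_mul, hsx i]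
  have htval : t = (∑ i ∈ A, |x i|) / r - (∑ i ∈ B, |x i|) / r := by
    rw [ht, hsplit (fun i => σ i * x i), htA, htB, ← Finset.sum_div, ← Finset.sum_div]
    ring
  have hAnn : 0 ≤ ∑ i ∈ A, |x i| := Finset.sum_nonneg fun i _ => abs_nonneg _
  have hBnn : 0 ≤ ∑ i ∈ B, |x i| := Finset.sum_nonneg fun i _ => abs_nonneg _
  have htub : t ≤ Real.sqrt k / r := by
    have h1 := habs_le A
    rw [← hk] at h1
    rw [htval]
    have h2 : (∑ i ∈ A, |x i|) / r ≤ Real.sqrt k / r := by gcongr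
    have h3 : 0 ≤ (∑ i ∈ B, |x i|) / r := by positivity
    linarith
  have htlb : -t ≤ Real.sqrt m / r := by
    have h1 := habs_le B
    rw [← hm] at h1
    rw [htval]
    have h2 : (∑ i ∈ B, |x i|) / r ≤ Real.sqrt m / r := by gcongr
    have h3 : 0 ≤ (∑ i ∈ A, |x i|) / r := by positivity
    linarith
  have hu2 : (Real.sqrt k / r) * (Real.sqrt k / r) = k / N := by
    rw [div_mul_div_comm, Real.mul_self_sqrt hk0, hr2]
  have hv2 : (Real.sqrt m / r) * (Real.sqrt m / r) = m / N := by
    rw [div_mul_div_comm, Real.mul_self_sqrt hm0, hr2]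
  have hidk : (k - m)/(N:ℝ) = 2*(k/N) - 1 := by
    field_simp
    linarith [hkm]
  have hidm : -((k - m)/(N:ℝ)) = 2*(m/N) - 1 := by
    field_simp
    linarith [hkm]
  clear_value s r A B k m t
  rw [hS]
  set u := Real.sqrt k / r with hu
  set v := Real.sqrt m / r with hv
  clear_value u v
  have hq1 : u * u - 2 * u + 1 = (u - 1) * (u - 1) := by ring
  have hq2 : v * v - 2 * v + 1 = (v - 1) * (v - 1) := by ring
  rcases abs_cases t with ⟨he, _⟩ | ⟨he, _⟩ <;> rw [he]
  · linarith [mul_self_nonneg (u - 1), hq1, hu2, htub, hidk,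
      le_abs_self ((k - m)/(N:ℝ))]
  · linarith [mul_self_nonneg (v - 1), hq2, hv2, htlb, hidm,
      neg_abs_le ((k - m)/(N:ℝ))]
end

section
/- Let P_1 be symmetric with eigenvalues μ_1 ≥ ... ≥ μ_N and orthonormal eigenvectors w_1,...,w_N, and set r_j = ⟨v_1, w_j⟩, s_j = ⟨v_2, w_j⟩ for orthonormal v_1, v_2. Then for θ not equal to any μ_j, det(I + P_0 R_1(θ)) = 1 + Σ_j (λ_1 r_j² + λ_2 s_j²)/(μ_j - θ) + (λ_1 λ_2 / 2) Σ_{j≠k} (r_j s_k - r_k s_j)²/((μ_j - θ)(μ_k - θ)), where P_0 = λ_1 v_1 v_1^T + λ_2 v_2 v_2^T and R_1(θ) = (P_1 - θI)^{-1}. -/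
open Matrix

lemma dsum_aux {N : ℕ} (r s g : Fin N → ℝ) :
    ∑ j, ∑ k ∈ Finset.univ.erase j, (r j * s k - r k * s j)^2 * (g j * g k)
      = 2 * ((∑ j, r j ^ 2 * g j) * (∑ j, s j ^ 2 * g j) - (∑ j, r j * s j * g j)^2) := by
  have h1 : ∀ j : Fin N, ∑ k ∈ Finset.univ.erase j, (r j * s k - r k * s j)^2 * (g j * g k)
      = ∑ k, (r j * s k - r k * s j)^2 * (g j * g k) := by
    intro j
    apply Finset.sum_erase
    simp
  simp_rw [h1]
  have h2 : ∀ j k : Fin N, (r j * s k - r k * s j)^2 * (g j * g k)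
      = (r j^2 * g j) * (s k^2 * g k) + (s j^2 * g j) * (r k^2 * g k)
        - (2 * (r j * s j * g j)) * (r k * s k * g k) := fun j k => by ring
  simp_rw [h2, Finset.sum_sub_distrib, Finset.sum_add_distrib, ← Finset.mul_sum,
    ← Finset.sum_mul]
  rw [show ∑ i, 2 * (r i * s i * g i) = 2 * ∑ i, r i * s i * g i from (Finset.mul_sum _ _ _).symm]
  ring

section pieces
variable (N : ℕ) (θ : ℝ) (μ : Fin N → ℝ) (w : Fin N → Fin N → ℝ)
  (hw : ∀ j k, w j ⬝ᵥ w k = if j = k then 1 else 0)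
  (P₁ R₁ : Matrix (Fin N) (Fin N) ℝ)

include hw in
lemma comp_aux : ∀ v : Fin N → ℝ, ∑ k, (v ⬝ᵥ w k) • w k = v := by
  intro v
  have hW : (Matrix.of w) * (Matrix.of w)ᵀ = 1 := by
    ext j k
    simpa [Matrix.mul_apply, Matrix.one_apply, dotProduct] using hw j k
  have hW' : (Matrix.of w)ᵀ * (Matrix.of w) = 1 := mul_eq_one_comm.mp hW
  funext i
  have h := congrArg (fun M => (M *ᵥ v) i) hW'
  simp only [Matrix.mulVec, Matrix.mul_apply, dotProduct, Matrix.one_apply,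
    Matrix.transpose_apply, Matrix.of_apply, Finset.sum_ite_eq, Finset.mem_univ,
    if_true, ite_mul, one_mul, zero_mul] at h
  simp only [Finset.sum_apply, Pi.smul_apply, smul_eq_mul, dotProduct]
  rw [← h]
  simp_rw [Finset.sum_mul]
  conv_rhs => rw [Finset.sum_comm]
  exact Finset.sum_congr rfl fun k _ => Finset.sum_congr rfl fun y _ => by ring

include hw in
lemma eig_aux (hP₁ : P₁ = ∑ j, μ j • Matrix.vecMulVec (w j) (w j)) :
    ∀ j, P₁ *ᵥ w j = μ j • w j := by
  intro j
  funext i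
  rw [hP₁]
  simp only [Matrix.mulVec, dotProduct, Matrix.sum_apply, Matrix.smul_apply,
    Matrix.vecMulVec_apply, smul_eq_mul, Pi.smul_apply, Finset.sum_mul]
  rw [Finset.sum_comm]
  have : ∀ k : Fin N, ∑ x, μ k * (w k i * w k x) * w j x
      = μ k * w k i * (if k = j then 1 else 0) := by
    intro k
    rw [← hw k j]
    simp only [dotProduct, Finset.mul_sum]
    apply Finset.sum_congr rfl
    intro x _
    ring
  simp only [this, mul_ite, mul_one, mul_zero]
  simp

include hw in
lemma res_aux (hP₁ : P₁ = ∑ j, μ j • Matrix.vecMulVec (w j) (w j))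
    (hθ : ∀ j, θ ≠ μ j)
    (hL : R₁ * (P₁ - θ • 1) = 1) :
    ∀ j, R₁ *ᵥ w j = (μ j - θ)⁻¹ • w j := by
  intro j
  have hd : μ j - θ ≠ 0 := sub_ne_zero.mpr fun h => hθ j h.symm
  have h1 : (P₁ - θ • 1) *ᵥ w j = (μ j - θ) • w j := by
    rw [Matrix.sub_mulVec, eig_aux N μ w hw P₁ hP₁ j, Matrix.smul_mulVec,
      Matrix.one_mulVec, sub_smul]
  have h2 : R₁ *ᵥ ((P₁ - θ • 1) *ᵥ w j) = w j := by
    rw [Matrix.mulVec_mulVec, hL, Matrix.one_mulVec]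
  rw [h1, Matrix.mulVec_smul] at h2
  calc R₁ *ᵥ w j = (μ j - θ)⁻¹ • ((μ j - θ) • (R₁ *ᵥ w j)) := by
        rw [smul_smul, inv_mul_cancel₀ hd, one_smul]
    _ = (μ j - θ)⁻¹ • w j := by rw [h2]

include hw in
lemma quad_aux (hP₁ : P₁ = ∑ j, μ j • Matrix.vecMulVec (w j) (w j))
    (hθ : ∀ j, θ ≠ μ j)
    (hL : R₁ * (P₁ - θ • 1) = 1) :
    ∀ a b : Fin N → ℝ,
      a ⬝ᵥ (R₁ *ᵥ b) = ∑ k, (a ⬝ᵥ w k) * ((b ⬝ᵥ w k) * (μ k - θ)⁻¹) := by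
  intro a b
  conv_lhs => rw [← comp_aux N w hw b]
  have hlin : R₁ *ᵥ (∑ k, (b ⬝ᵥ w k) • w k) = ∑ k, (b ⬝ᵥ w k) • (R₁ *ᵥ w k) := by
    simp only [← Matrix.mulVecLin_apply, map_sum, _root_.map_smul]
  rw [hlin]
  simp_rw [res_aux N θ μ w hw P₁ R₁ hP₁ hθ hL, smul_smul]
  simp only [dotProduct, Finset.sum_apply, Pi.smul_apply, smul_eq_mul]
  simp_rw [Finset.mul_sum]
  rw [Finset.sum_comm]
  apply Finset.sum_congr rfl
  intro k _
  conv_rhs => rw [Finset.sum_mul]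
  exact Finset.sum_congr rfl fun i _ => by ring

end pieces

theorem stmt_10 (N : ℕ) (θ l₁ l₂ : ℝ) (μ : Fin N → ℝ) (w : Fin N → Fin N → ℝ)
    (hw : ∀ j k, w j ⬝ᵥ w k = if j = k then 1 else 0)
    (v₁ v₂ : Fin N → ℝ)
    (hv₁ : v₁ ⬝ᵥ v₁ = 1) (hv₂ : v₂ ⬝ᵥ v₂ = 1) (hv₁₂ : v₁ ⬝ᵥ v₂ = 0)
    (P₁ R₁ : Matrix (Fin N) (Fin N) ℝ)
    (hP₁ : P₁ = ∑ j, μ j • Matrix.vecMulVec (w j) (w j))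
    (hθ : ∀ j, θ ≠ μ j)
    (hR1 : R₁ * (P₁ - θ • 1) = 1 ∧ (P₁ - θ • 1) * R₁ = 1) :
    let P₀ := l₁ • Matrix.vecMulVec v₁ v₁ + l₂ • Matrix.vecMulVec v₂ v₂
    let r : Fin N → ℝ := fun j => v₁ ⬝ᵥ w j
    let s : Fin N → ℝ := fun j => v₂ ⬝ᵥ w j
    (1 + P₀ * R₁).det
      = 1 + ∑ j, (l₁ * r j ^ 2 + l₂ * s j ^ 2) / (μ j - θ)
        + (l₁ * l₂ / 2) * ∑ j, ∑ k ∈ Finset.univ.erase j,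
            (r j * s k - r k * s j) ^ 2 / ((μ j - θ) * (μ k - θ)) := by
  intro P₀ r s
  obtain ⟨hL, hRr⟩ := hR1
  have hr : ∀ k, r k = v₁ ⬝ᵥ w k := fun _ => rfl
  have hs : ∀ k, s k = v₂ ⬝ᵥ w k := fun _ => rfl
  have hP0 : P₀ = l₁ • Matrix.vecMulVec v₁ v₁ + l₂ • Matrix.vecMulVec v₂ v₂ := rfl
  have hQ := quad_aux N θ μ w hw P₁ R₁ hP₁ hθ hL
  set A : Matrix (Fin N) (Fin 2) ℝ :=
    Matrix.of fun i t => if t = 0 then l₁ * v₁ i else l₂ * v₂ i with hA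
  set B : Matrix (Fin 2) (Fin N) ℝ :=
    Matrix.of fun t i => if t = 0 then v₁ i else v₂ i with hB
  have hAB : A * B = P₀ := by
    rw [hP0]
    ext i j
    simp [hA, hB, Matrix.mul_apply, Fin.sum_univ_two, Matrix.vecMulVec_apply,
      Matrix.add_apply, Matrix.smul_apply, smul_eq_mul]
    ring
  have hdet : (1 + P₀ * R₁).det = (1 + B * R₁ * A).det := by
    rw [← hAB, Matrix.mul_assoc, Matrix.det_one_add_mul_comm, Matrix.mul_assoc]
  have hent : ∀ t t', (B * R₁ * A) t t' = (fun i => B t i) ⬝ᵥ (R₁ *ᵥ fun j => A j t') := by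
    intro t t'
    rw [Matrix.mul_assoc]
    simp [Matrix.mul_apply, Matrix.mulVec, dotProduct]
  have hc1 : (fun i => B 0 i) = v₁ := by funext i; simp [hB]
  have hc2 : (fun i => B 1 i) = v₂ := by funext i; simp [hB]
  have hc3 : (fun j => A j 0) = l₁ • v₁ := by funext i; simp [hA]
  have hc4 : (fun j => A j 1) = l₂ • v₂ := by funext i; simp [hA]
  have entry : ∀ (a : Fin N → ℝ) (c : ℝ) (b : Fin N → ℝ),
      a ⬝ᵥ (R₁ *ᵥ (c • b)) = c * ∑ k, (a ⬝ᵥ w k) * (b ⬝ᵥ w k) * (μ k - θ)⁻¹ := by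
    intro a c b
    rw [hQ, Finset.mul_sum]
    apply Finset.sum_congr rfl
    intro k _
    rw [smul_dotProduct, smul_eq_mul]
    ring
  have e00 : (B * R₁ * A) 0 0 = l₁ * ∑ k, (v₁ ⬝ᵥ w k) * (v₁ ⬝ᵥ w k) * (μ k - θ)⁻¹ := by
    rw [hent, hc1, hc3, entry]
  have e01 : (B * R₁ * A) 0 1 = l₂ * ∑ k, (v₁ ⬝ᵥ w k) * (v₂ ⬝ᵥ w k) * (μ k - θ)⁻¹ := by
    rw [hent, hc1, hc4, entry]
  have e10 : (B * R₁ * A) 1 0 = l₁ * ∑ k, (v₂ ⬝ᵥ w k) * (v₁ ⬝ᵥ w k) * (μ k - θ)⁻¹ := by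
    rw [hent, hc2, hc3, entry]
  have e11 : (B * R₁ * A) 1 1 = l₂ * ∑ k, (v₂ ⬝ᵥ w k) * (v₂ ⬝ᵥ w k) * (μ k - θ)⁻¹ := by
    rw [hent, hc2, hc4, entry]
  rw [hdet, Matrix.det_fin_two]
  simp only [Matrix.add_apply, Matrix.one_apply_eq,
    Matrix.one_apply_ne (show (0:Fin 2) ≠ 1 by decide),
    Matrix.one_apply_ne (show (1:Fin 2) ≠ 0 by decide), zero_add]
  rw [e00, e01, e10, e11]
  simp only [hr, hs]
  -- scalar identity
  have hX : ∑ k, (v₁ ⬝ᵥ w k) * (v₁ ⬝ᵥ w k) * (μ k - θ)⁻¹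
      = ∑ k, (v₁ ⬝ᵥ w k) ^ 2 * (μ k - θ)⁻¹ :=
    Finset.sum_congr rfl fun _ _ => by ring
  have hY : ∑ k, (v₂ ⬝ᵥ w k) * (v₂ ⬝ᵥ w k) * (μ k - θ)⁻¹
      = ∑ k, (v₂ ⬝ᵥ w k) ^ 2 * (μ k - θ)⁻¹ :=
    Finset.sum_congr rfl fun _ _ => by ring
  have hZ : ∑ k, (v₂ ⬝ᵥ w k) * (v₁ ⬝ᵥ w k) * (μ k - θ)⁻¹
      = ∑ k, (v₁ ⬝ᵥ w k) * (v₂ ⬝ᵥ w k) * (μ k - θ)⁻¹ :=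
    Finset.sum_congr rfl fun _ _ => by ring
  rw [hX, hY, hZ]
  have h1 : ∑ j, (l₁ * (v₁ ⬝ᵥ w j) ^ 2 + l₂ * (v₂ ⬝ᵥ w j) ^ 2) / (μ j - θ)
      = l₁ * ∑ k, (v₁ ⬝ᵥ w k) ^ 2 * (μ k - θ)⁻¹
        + l₂ * ∑ k, (v₂ ⬝ᵥ w k) ^ 2 * (μ k - θ)⁻¹ := by
    rw [Finset.mul_sum, Finset.mul_sum, ← Finset.sum_add_distrib]
    apply Finset.sum_congr rfl
    intro k _
    rw [div_eq_mul_inv]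
    ring
  rw [h1]
  have h2 : ∑ j, ∑ k ∈ Finset.univ.erase j,
        ((v₁ ⬝ᵥ w j) * (v₂ ⬝ᵥ w k) - (v₁ ⬝ᵥ w k) * (v₂ ⬝ᵥ w j)) ^ 2 / ((μ j - θ) * (μ k - θ))
      = ∑ j, ∑ k ∈ Finset.univ.erase j,
        ((v₁ ⬝ᵥ w j) * (v₂ ⬝ᵥ w k) - (v₁ ⬝ᵥ w k) * (v₂ ⬝ᵥ w j)) ^ 2
          * ((μ j - θ)⁻¹ * (μ k - θ)⁻¹) :=
    Finset.sum_congr rfl fun j _ => Finset.sum_congr rfl fun k _ => by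
      rw [div_eq_mul_inv, mul_inv]
  rw [h2, dsum_aux (fun j => v₁ ⬝ᵥ w j) (fun j => v₂ ⬝ᵥ w j) (fun j => (μ j - θ)⁻¹)]
  have h3 : ∑ k, (v₁ ⬝ᵥ w k) * (v₂ ⬝ᵥ w k) * (μ k - θ)⁻¹
      = ∑ j, (v₁ ⬝ᵥ w j) * (v₂ ⬝ᵥ w j) * (μ j - θ)⁻¹ := rfl
  ring
end

section
/- Let M = α x x^T with ‖x‖ = 1 and α > 0, let M' be a symmetric matrix, and let β x̃ x̃^T be the best rank-1 approximation of M' (x̃ a unit top eigenvector). Then min{‖x - x̃‖, ‖x + x̃‖} ≤ (2√2 / max{|α|, |β|}) · ‖M - M'‖, where ‖·‖ on matrices is the operator norm. -/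
set_option maxHeartbeats 1000000

open RealInnerProductSpace

theorem stmt_11 (N : ℕ) (α β : ℝ) (hα : 0 < α)
    (M M' : EuclideanSpace ℝ (Fin N) →L[ℝ] EuclideanSpace ℝ (Fin N))
    (x xt : EuclideanSpace ℝ (Fin N)) (hx : ‖x‖ = 1) (hxt : ‖xt‖ = 1)
    (hM : ∀ v, M v = (α * ⟪x, v⟫) • x)
    (hM' : ∀ u v, ⟪M' u, v⟫ = ⟪u, M' v⟫)
    (heig : M' xt = β • xt)
    (htop : ∀ v, ‖M' v‖ ≤ |β| * ‖v‖) :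
    min ‖x - xt‖ ‖x + xt‖ ≤ (2 * Real.sqrt 2 / max |α| |β|) * ‖M - M'‖ := by
  set E := M - M' with hE
  set c : ℝ := ⟪x, xt⟫ with hc
  have hxx : ⟪x, x⟫ = 1 := by
    rw [real_inner_self_eq_norm_sq, hx]; norm_num
  have hc1 : |c| ≤ 1 := by
    calc |c| ≤ ‖x‖ * ‖xt‖ := abs_real_inner_le_norm x xt
    _ = 1 := by rw [hx, hxt, mul_one]
  have hc1' : c ^ 2 ≤ 1 := by
    have := sq_abs c ▸ pow_le_one₀ (abs_nonneg c) hc1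
    nlinarith [sq_abs c, sq_nonneg (|c| - 1), abs_nonneg c]
  set s : ℝ := Real.sqrt (1 - c ^ 2) with hs
  have hs0 : 0 ≤ s := Real.sqrt_nonneg _
  have hs2 : s ^ 2 = 1 - c ^ 2 := Real.sq_sqrt (by linarith)
  have hs1 : s ≤ 1 := by nlinarith [sq_nonneg c]
  have hEnn : 0 ≤ ‖E‖ := norm_nonneg E
  have hExt : E xt = (α * c) • x - β • xt := by
    simp only [hE, ContinuousLinearMap.sub_apply, hM, heig, hc]
  have hnormExt : ‖E xt‖ ≤ ‖E‖ := by
    calc ‖E xt‖ ≤ ‖E‖ * ‖xt‖ := E.le_opNorm xt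
    _ = ‖E‖ := by rw [hxt, mul_one]
  have hExt2 : ‖E xt‖ ^ 2 = (α * c) ^ 2 - 2 * (α * c * (β * c)) + β ^ 2 := by
    rw [hExt, norm_sub_sq_real, real_inner_smul_left, real_inner_smul_right,
        norm_smul, norm_smul, hx, hxt, ← hc]
    simp only [Real.norm_eq_abs, mul_one, sq_abs]
  have hβs : |β| * s ≤ ‖E‖ := by
    have h1 : (|β| * s) ^ 2 ≤ ‖E xt‖ ^ 2 := by
      rw [hExt2, mul_pow, sq_abs, hs2]
      nlinarith [sq_nonneg (c * (α - β))]
    nlinarith [mul_nonneg (abs_nonneg β) hs0, norm_nonneg (E xt)]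
  have hαb : α ≤ |β| + ‖E‖ := by
    have h1 : M x = E x + M' x := by simp [hE]
    have h2 : ‖M x‖ = α := by
      rw [hM x, hxx, mul_one, norm_smul, hx, mul_one, Real.norm_eq_abs,
        abs_of_pos hα]
    have h3 : ‖E x‖ ≤ ‖E‖ := by
      calc ‖E x‖ ≤ ‖E‖ * ‖x‖ := E.le_opNorm x
      _ = ‖E‖ := by rw [hx, mul_one]
    have h4 : ‖M' x‖ ≤ |β| := by
      calc ‖M' x‖ ≤ |β| * ‖x‖ := htop x
      _ = |β| := by rw [hx, mul_one]
    calc α = ‖M x‖ := h2.symm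
    _ ≤ ‖E x‖ + ‖M' x‖ := by rw [h1]; exact norm_add_le _ _
    _ ≤ |β| + ‖E‖ := by linarith
  have hmaxpos : 0 < max |α| |β| :=
    lt_of_lt_of_le (abs_pos.mpr hα.ne') (le_max_left _ _)
  have hkey : max |α| |β| * s ≤ 2 * ‖E‖ := by
    rcases max_cases |α| |β| with ⟨h, _⟩ | ⟨h, _⟩
    · rw [h, abs_of_pos hα]
      have : α * s ≤ (|β| + ‖E‖) * s := by
        apply mul_le_mul_of_nonneg_right hαb hs0
      nlinarith [mul_le_mul_of_nonneg_left hs1 hEnn]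
    · rw [h]; linarith
  have hmin : min ‖x - xt‖ ‖x + xt‖ ≤ Real.sqrt 2 * s := by
    have hrt2 : (0:ℝ) ≤ Real.sqrt 2 := Real.sqrt_nonneg 2
    have hrt22 : Real.sqrt 2 ^ 2 = 2 := Real.sq_sqrt (by norm_num)
    rcases le_or_gt 0 c with hcpos | hcneg
    · apply le_trans (min_le_left _ _)
      have h1 : ‖x - xt‖ ^ 2 = 2 - 2 * c := by
        rw [norm_sub_sq_real, hx, hxt, ← hc]; ring
      have h2 : ‖x - xt‖ ^ 2 ≤ (Real.sqrt 2 * s) ^ 2 := by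
        rw [h1, mul_pow, hrt22, hs2]; nlinarith
      nlinarith [norm_nonneg (x - xt), mul_nonneg hrt2 hs0]
    · apply le_trans (min_le_right _ _)
      have h1 : ‖x + xt‖ ^ 2 = 2 + 2 * c := by
        rw [norm_add_sq_real, hx, hxt, ← hc]; ring
      have h2 : ‖x + xt‖ ^ 2 ≤ (Real.sqrt 2 * s) ^ 2 := by
        rw [h1, mul_pow, hrt22, hs2]; nlinarith [abs_nonneg c, neg_abs_le c]
      nlinarith [norm_nonneg (x + xt), mul_nonneg hrt2 hs0]
  have hrt2 : (0:ℝ) ≤ Real.sqrt 2 := Real.sqrt_nonneg 2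
  calc min ‖x - xt‖ ‖x + xt‖ ≤ Real.sqrt 2 * s := hmin
  _ ≤ Real.sqrt 2 * (2 * ‖E‖ / max |α| |β|) := by
      apply mul_le_mul_of_nonneg_left _ hrt2
      rw [le_div_iff₀ hmaxpos]
      nlinarith
  _ = (2 * Real.sqrt 2 / max |α| |β|) * ‖E‖ := by ring
end
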